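/- For real matrices B, C, D, F of compatible dimensions, the nuclear norm of the block matrix [[B, C], [D, F]] equals ‖B‖_* if and only if C = 0, D = 0, and F = 0. -/

import Mathlib

open Matrix Finset Polynomial

/-- The nuclear norm of a real matrix: the sum of its singular values,
i.e. the sum of the square roots of the eigenvalues of `Mᵀ * M`. -/
noncomputable def nuclearNorm {m n : Type*} [Fintype m] [Fintype n] [DecidableEq n]
    (M : Matrix m n ℝ) : ℝ :=
  ∑ i, Real.sqrt ((show (Mᵀ * M).IsHermitian by
    rw [IsHermitian, conjTranspose_eq_transpose_of_trivial, transpose_mul, transpose_transpose]).eigenvalues i)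

noncomputable def Matrix.PosSemidef.sqrt {k : Type*} [Fintype k] [DecidableEq k] {S : Matrix k k ℝ}
    (h : S.PosSemidef) : Matrix k k ℝ :=
  (h.1.eigenvectorUnitary : Matrix k k ℝ) * diagonal (Real.sqrt ∘ h.1.eigenvalues)
    * (star h.1.eigenvectorUnitary : Matrix k k ℝ)

lemma Matrix.PosSemidef.posSemidef_sqrt {k : Type*} [Fintype k] [DecidableEq k] {S : Matrix k k ℝ}
    (h : S.PosSemidef) : h.sqrt.PosSemidef := by
  unfold Matrix.PosSemidef.sqrt
  have hd : (diagonal (Real.sqrt ∘ h.1.eigenvalues)).PosSemidef :=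
    posSemidef_diagonal_iff.mpr fun i => Real.sqrt_nonneg _
  simpa [Matrix.star_eq_conjTranspose] using
    hd.mul_mul_conjTranspose_same (h.1.eigenvectorUnitary : Matrix k k ℝ)

lemma Matrix.PosSemidef.sqrt_mul_self {k : Type*} [Fintype k] [DecidableEq k] {S : Matrix k k ℝ}
    (h : S.PosSemidef) : h.sqrt * h.sqrt = S := by
  have hU : (star h.1.eigenvectorUnitary : Matrix k k ℝ) * (h.1.eigenvectorUnitary : Matrix k k ℝ)
      = 1 := Matrix.UnitaryGroup.star_mul_self _
  conv_rhs => rw [h.1.spectral_theorem, Unitary.conjStarAlgAut_apply]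
  unfold Matrix.PosSemidef.sqrt
  set U := (h.1.eigenvectorUnitary : Matrix k k ℝ)
  set V := (star h.1.eigenvectorUnitary : Matrix k k ℝ)
  set D := diagonal (Real.sqrt ∘ h.1.eigenvalues)
  rw [show U * D * V * (U * D * V) = U * (D * (V * U) * D) * V by noncomm_ring, hU, mul_one,
    diagonal_mul_diagonal]
  have he : ∀ i, √(h.1.eigenvalues i) * √(h.1.eigenvalues i) = h.1.eigenvalues i :=
    fun i => Real.mul_self_sqrt (h.eigenvalues_nonneg i)
  congr 2
  simp [he]

namespace NucAux

variable {k : Type*} [Fintype k] [DecidableEq k]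

lemma trace_unitary_conj (U : Matrix.unitaryGroup k ℝ) (D : Matrix k k ℝ) :
    ((U : Matrix k k ℝ) * D * (star U : Matrix k k ℝ)).trace = D.trace := by
  rw [Matrix.trace_mul_cycle]
  have h : (star U : Matrix k k ℝ) * (U : Matrix k k ℝ) = 1 :=
    Matrix.UnitaryGroup.star_mul_self U
  rw [h, one_mul]

lemma trace_sqrt {S : Matrix k k ℝ} (h : S.PosSemidef) :
    h.sqrt.trace = ∑ i, Real.sqrt (h.1.eigenvalues i) := by
  rw [Matrix.PosSemidef.sqrt, trace_unitary_conj, Matrix.trace_diagonal]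
  norm_num

lemma trace_eq_sum_eigenvalues {S : Matrix k k ℝ} (h : S.IsHermitian) :
    S.trace = ∑ i, h.eigenvalues i := by
  conv_lhs => rw [h.spectral_theorem, Unitary.conjStarAlgAut_apply]
  rw [trace_unitary_conj, Matrix.trace_diagonal]
  norm_num

lemma pow_unitary_conj (U : Matrix.unitaryGroup k ℝ) (D : Matrix k k ℝ) (j : ℕ) :
    ((U : Matrix k k ℝ) * D * (star U : Matrix k k ℝ)) ^ j
      = (U : Matrix k k ℝ) * D ^ j * (star U : Matrix k k ℝ) := by
  induction j with
  | zero => simp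
  | succ j ih =>
      rw [pow_succ, ih, pow_succ]
      have h : (star U : Matrix k k ℝ) * (U : Matrix k k ℝ) = 1 :=
        Matrix.UnitaryGroup.star_mul_self U
      calc (U : Matrix k k ℝ) * D ^ j * (star U : Matrix k k ℝ)
            * ((U : Matrix k k ℝ) * D * (star U : Matrix k k ℝ))
          = (U : Matrix k k ℝ) * D ^ j * (((star U : Matrix k k ℝ) * (U : Matrix k k ℝ)) * D)
            * (star U : Matrix k k ℝ) := by noncomm_ring
        _ = (U : Matrix k k ℝ) * (D ^ j * D) * (star U : Matrix k k ℝ) := by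
            rw [h, one_mul]; noncomm_ring

lemma trace_pow_eq {S : Matrix k k ℝ} (h : S.IsHermitian) (j : ℕ) :
    (S ^ j).trace = ∑ i, h.eigenvalues i ^ j := by
  conv_lhs => rw [h.spectral_theorem, Unitary.conjStarAlgAut_apply]
  rw [pow_unitary_conj, trace_unitary_conj, Matrix.diagonal_pow, Matrix.trace_diagonal]
  norm_num

lemma sqrt_mono {A B : Matrix k k ℝ} (hA : A.PosSemidef) (hB : B.PosSemidef) :
    ((hA.add hB).sqrt - hA.sqrt).PosSemidef := by
  set X := (hA.add hB).sqrt with hXdef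
  set Y := hA.sqrt with hYdef
  have hX : X.PosSemidef := Matrix.PosSemidef.posSemidef_sqrt _
  have hY : Y.PosSemidef := Matrix.PosSemidef.posSemidef_sqrt _
  have hT : (X - Y).IsHermitian := hX.1.sub hY.1
  refine hT.posSemidef_iff_eigenvalues_nonneg.mpr fun i => ?_
  by_contra hneg
  push_neg at hneg
  set μ := hT.eigenvalues i with hμdef
  set v : k → ℝ := ⇑(hT.eigenvectorBasis i) with hvdef
  have hv : (X - Y) *ᵥ v = μ • v := hT.mulVec_eigenvectorBasis i
  have hvne : v ≠ 0 := by
    have := hT.eigenvectorBasis.orthonormal.ne_zero i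
    intro h
    apply this
    ext j
    exact congrFun h j
  have hXX : X * X = A + B := (hA.add hB).sqrt_mul_self
  have hYY : Y * Y = A := hA.sqrt_mul_self
  have key : (X + Y) * (X - Y) + (X - Y) * (X + Y) = B + B := by
    have : (X + Y) * (X - Y) + (X - Y) * (X + Y) = (X * X - Y * Y) + (X * X - Y * Y) := by
      noncomm_ring
    rw [this, hXX, hYY]
    abel
  have hsymm : (X - Y)ᵀ = X - Y := hT
  have hvec : v ᵥ* (X - Y) = μ • v := by
    rw [← Matrix.mulVec_transpose, hsymm, hv]
  set s : ℝ := v ⬝ᵥ ((X + Y) *ᵥ v) with hsdef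
  have hBv : v ⬝ᵥ (B *ᵥ v) + v ⬝ᵥ (B *ᵥ v) = μ * s + μ * s := by
    have := congrArg (fun M : Matrix k k ℝ => v ⬝ᵥ (M *ᵥ v)) key
    simp only [Matrix.add_mulVec, dotProduct_add] at this
    rw [← this]
    congr 1
    · rw [← Matrix.mulVec_mulVec, hv, Matrix.mulVec_smul, dotProduct_smul]
      rfl
    · rw [← Matrix.mulVec_mulVec, Matrix.dotProduct_mulVec, hvec, smul_dotProduct]
      rfl
  have hBv' : v ⬝ᵥ (B *ᵥ v) = μ * s := by linarith
  have hBnn : 0 ≤ v ⬝ᵥ (B *ᵥ v) := by simpa using hB.dotProduct_mulVec_nonneg v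
  have hXnn : 0 ≤ v ⬝ᵥ (X *ᵥ v) := by simpa using hX.dotProduct_mulVec_nonneg v
  have hYnn : 0 ≤ v ⬝ᵥ (Y *ᵥ v) := by simpa using hY.dotProduct_mulVec_nonneg v
  have hs : s = v ⬝ᵥ (X *ᵥ v) + v ⬝ᵥ (Y *ᵥ v) := by
    rw [hsdef, Matrix.add_mulVec, dotProduct_add]
  have hsle : s ≤ 0 := by have h0 : μ < 0 := hneg; nlinarith
  have hXv0 : v ⬝ᵥ (X *ᵥ v) = 0 := by linarith
  have hYv0 : v ⬝ᵥ (Y *ᵥ v) = 0 := by linarith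
  have hXv : X *ᵥ v = 0 := (hX.dotProduct_mulVec_zero_iff v).mp (by simpa using hXv0)
  have hYv : Y *ᵥ v = 0 := (hY.dotProduct_mulVec_zero_iff v).mp (by simpa using hYv0)
  have : μ • v = 0 := by
    rw [← hv, Matrix.sub_mulVec, hXv, hYv, sub_zero]
  rcases smul_eq_zero.mp this with h | h
  · exact absurd h (ne_of_lt hneg)
  · exact hvne h

/-- total function: trace of the psd square root -/
noncomputable def trs (S : Matrix k k ℝ) : ℝ :=
  letI := Classical.dec S.PosSemidef
  if h : S.PosSemidef then h.sqrt.trace else 0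

lemma trs_of {S : Matrix k k ℝ} (h : S.PosSemidef) : trs S = h.sqrt.trace := by
  unfold trs
  exact dif_pos h

lemma psd_trace_nonneg {T : Matrix k k ℝ} (h : T.PosSemidef) : 0 ≤ T.trace := by
  rw [trace_eq_sum_eigenvalues h.1]
  exact Finset.sum_nonneg fun i _ => h.eigenvalues_nonneg i

lemma psd_trace_eq_zero {T : Matrix k k ℝ} (h : T.PosSemidef) (h0 : T.trace = 0) : T = 0 := by
  have hsum : ∑ i, h.1.eigenvalues i = 0 := by
    rw [← trace_eq_sum_eigenvalues h.1, h0]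
  have he : ∀ i ∈ Finset.univ, h.1.eigenvalues i = 0 :=
    (Finset.sum_eq_zero_iff_of_nonneg (fun i _ => h.eigenvalues_nonneg i)).mp hsum
  have hd : Matrix.diagonal (RCLike.ofReal ∘ h.1.eigenvalues) = (0 : Matrix k k ℝ) := by
    have hfun : (RCLike.ofReal ∘ h.1.eigenvalues : k → ℝ) = fun _ => 0 := by
      funext i
      simpa using he i (Finset.mem_univ i)
    rw [hfun]
    exact Matrix.diagonal_zero
  calc T = _ := h.1.spectral_theorem
    _ = 0 := by rw [hd, map_zero]

lemma trs_le_trs_add {A B : Matrix k k ℝ} (hA : A.PosSemidef) (hB : B.PosSemidef) :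
    trs A ≤ trs (A + B) := by
  have hT := sqrt_mono hA hB
  have h := psd_trace_nonneg hT
  rw [Matrix.trace_sub] at h
  rw [trs_of hA, trs_of (hA.add hB)]
  linarith

lemma trs_add_eq_iff {A B : Matrix k k ℝ} (hA : A.PosSemidef) (hB : B.PosSemidef) :
    trs (A + B) = trs A ↔ B = 0 := by
  constructor
  · intro h
    have hT := sqrt_mono hA hB
    rw [trs_of hA, trs_of (hA.add hB)] at h
    have htr : ((hA.add hB).sqrt - hA.sqrt).trace = 0 := by
      rw [Matrix.trace_sub]
      linarith
    have h0 : (hA.add hB).sqrt = hA.sqrt := sub_eq_zero.mp (psd_trace_eq_zero hT htr)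
    have hAB : A + B = A := by
      conv_lhs => rw [← (hA.add hB).sqrt_mul_self, h0, hA.sqrt_mul_self]
    exact add_eq_left.mp hAB
  · rintro rfl
    rw [add_zero]

lemma trs_of_eq {S S' : Matrix k k ℝ} (h : S = S') : trs S = trs S' := by rw [h]

end NucAux

open NucAux

lemma psd_transpose_mul_self {a b : Type*} [Fintype a] [Fintype b] (X : Matrix a b ℝ) :
    (Xᵀ * X).PosSemidef := by
  have := Matrix.posSemidef_conjTranspose_mul_self X
  rwa [Matrix.conjTranspose_eq_transpose_of_trivial] at this

lemma trace_aeval {k : Type*} [Fintype k] [DecidableEq k] {S : Matrix k k ℝ}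
    (h : S.IsHermitian) (p : ℝ[X]) :
    (Polynomial.aeval S p).trace = ∑ i, p.eval (h.eigenvalues i) := by
  rw [Polynomial.aeval_eq_sum_range (R := ℝ) S, Matrix.trace_sum]
  simp_rw [Matrix.trace_smul, trace_pow_eq h, smul_eq_mul, Finset.mul_sum]
  rw [Finset.sum_comm]
  refine Finset.sum_congr rfl fun i _ => ?_
  rw [Polynomial.eval_eq_sum_range]

lemma trace_pow_transpose {a b : Type*} [Fintype a] [Fintype b] [DecidableEq a] [DecidableEq b]
    (X : Matrix a b ℝ) (j : ℕ) :
    ((Xᵀ * X) ^ (j + 1)).trace = ((X * Xᵀ) ^ (j + 1)).trace := by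
  have key : ∀ j : ℕ, (Xᵀ * X) ^ (j + 1) = Xᵀ * (X * Xᵀ) ^ j * X := by
    intro j
    induction j with
    | zero => simp [mul_assoc]
    | succ j ih =>
        rw [pow_succ, ih]
        calc Xᵀ * (X * Xᵀ) ^ j * X * (Xᵀ * X)
            = Xᵀ * ((X * Xᵀ) ^ j * (X * Xᵀ)) * X := by simp only [Matrix.mul_assoc]
          _ = Xᵀ * (X * Xᵀ) ^ (j + 1) * X := by rw [← pow_succ]
  rw [key, Matrix.trace_mul_cycle, ← pow_succ']

lemma trs_transpose {a b : Type*} [Fintype a] [Fintype b] [DecidableEq a] [DecidableEq b]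
    (X : Matrix a b ℝ) : trs (Xᵀ * X) = trs (X * Xᵀ) := by
  have h1 : (Xᵀ * X).PosSemidef := psd_transpose_mul_self X
  have h2 : (X * Xᵀ).PosSemidef := by
    have := psd_transpose_mul_self Xᵀ
    rwa [Matrix.transpose_transpose] at this
  set E : Finset ℝ :=
    insert 0 ((Finset.univ.image h1.1.eigenvalues) ∪ (Finset.univ.image h2.1.eigenvalues)) with hE
  set p : Polynomial ℝ := Lagrange.interpolate E id Real.sqrt with hpdef
  have hp : ∀ x ∈ E, p.eval x = Real.sqrt x := fun x hx =>
    Lagrange.eval_interpolate_at_node _ (Function.injective_id.injOn) hx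
  have hp0 : p.coeff 0 = 0 := by
    rw [Polynomial.coeff_zero_eq_eval_zero, hp 0 (Finset.mem_insert_self _ _), Real.sqrt_zero]
  have key : (Polynomial.aeval (Xᵀ * X) p).trace = (Polynomial.aeval (X * Xᵀ) p).trace := by
    rw [Polynomial.aeval_eq_sum_range (R := ℝ), Polynomial.aeval_eq_sum_range (R := ℝ),
      Matrix.trace_sum, Matrix.trace_sum]
    refine Finset.sum_congr rfl fun j _ => ?_
    cases j with
    | zero => simp [hp0]
    | succ j => rw [Matrix.trace_smul, Matrix.trace_smul, trace_pow_transpose]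
  have e1 : trs (Xᵀ * X) = (Polynomial.aeval (Xᵀ * X) p).trace := by
    rw [trs_of h1, trace_sqrt h1, trace_aeval h1.1 p]
    refine Finset.sum_congr rfl fun i _ => ?_
    rw [hp _ (Finset.mem_insert_of_mem (Finset.mem_union_left _
      (Finset.mem_image_of_mem _ (Finset.mem_univ i))))]
  have e2 : trs (X * Xᵀ) = (Polynomial.aeval (X * Xᵀ) p).trace := by
    rw [trs_of h2, trace_sqrt h2, trace_aeval h2.1 p]
    refine Finset.sum_congr rfl fun i _ => ?_
    rw [hp _ (Finset.mem_insert_of_mem (Finset.mem_union_right _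
      (Finset.mem_image_of_mem _ (Finset.mem_univ i))))]
  rw [e1, e2, key]

lemma nuclearNorm_eq_trs {m n : Type*} [Fintype m] [Fintype n] [DecidableEq n]
    (M : Matrix m n ℝ) : nuclearNorm M = trs (Mᵀ * M) := by
  have h := psd_transpose_mul_self M
  rw [trs_of h, trace_sqrt h]
  rfl

theorem stmt_2 {m m' n n' : Type*} [Fintype m] [Fintype m'] [Fintype n] [Fintype n']
    [DecidableEq n] [DecidableEq n']
    (B : Matrix m n ℝ) (C : Matrix m n' ℝ) (D : Matrix m' n ℝ) (F : Matrix m' n' ℝ) :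
    nuclearNorm (Matrix.fromBlocks B C D F) = nuclearNorm B ↔ C = 0 ∧ D = 0 ∧ F = 0 := by
  classical
  set R1 : Matrix m (n ⊕ n') ℝ := Matrix.fromCols B C with hR1
  set R2 : Matrix m' (n ⊕ n') ℝ := Matrix.fromCols D F with hR2
  have hM : (Matrix.fromBlocks B C D F)ᵀ * Matrix.fromBlocks B C D F
      = R1ᵀ * R1 + R2ᵀ * R2 := by
    rw [← Matrix.fromRows_fromCols_eq_fromBlocks, Matrix.transpose_fromRows,
      Matrix.fromCols_mul_fromRows]
  have hR1R1 : R1 * R1ᵀ = B * Bᵀ + C * Cᵀ := by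
    rw [hR1, Matrix.transpose_fromCols, Matrix.fromCols_mul_fromRows]
  have psdR1 : (R1ᵀ * R1).PosSemidef := psd_transpose_mul_self R1
  have psdR2 : (R2ᵀ * R2).PosSemidef := psd_transpose_mul_self R2
  have psdBBt : (B * Bᵀ).PosSemidef := by
    have := psd_transpose_mul_self Bᵀ
    rwa [Matrix.transpose_transpose] at this
  have psdCCt : (C * Cᵀ).PosSemidef := by
    have := psd_transpose_mul_self Cᵀ
    rwa [Matrix.transpose_transpose] at this
  have eM : nuclearNorm (Matrix.fromBlocks B C D F) = trs (R1ᵀ * R1 + R2ᵀ * R2) := by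
    rw [nuclearNorm_eq_trs, hM]
  have eB : nuclearNorm B = trs (B * Bᵀ) := by
    rw [nuclearNorm_eq_trs, trs_transpose]
  have eR1 : trs (R1ᵀ * R1) = trs (B * Bᵀ + C * Cᵀ) := by
    rw [trs_transpose, hR1R1]
  constructor
  · intro h
    rw [eM, eB] at h
    have i1 : trs (R1ᵀ * R1) ≤ trs (R1ᵀ * R1 + R2ᵀ * R2) := trs_le_trs_add psdR1 psdR2
    have i2 : trs (B * Bᵀ) ≤ trs (B * Bᵀ + C * Cᵀ) := trs_le_trs_add psdBBt psdCCt
    have eq1 : trs (R1ᵀ * R1 + R2ᵀ * R2) = trs (R1ᵀ * R1) := by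
      rw [eR1] at i1 ⊢
      linarith
    have eq2 : trs (B * Bᵀ + C * Cᵀ) = trs (B * Bᵀ) := by
      rw [← eR1]
      linarith
    have hR2z : R2ᵀ * R2 = 0 := (trs_add_eq_iff psdR1 psdR2).mp eq1
    have hCCz : C * Cᵀ = 0 := (trs_add_eq_iff psdBBt psdCCt).mp eq2
    have hR2zero : R2 = 0 := by
      have : R2ᴴ * R2 = 0 := by
        rwa [Matrix.conjTranspose_eq_transpose_of_trivial]
      exact Matrix.conjTranspose_mul_self_eq_zero.mp this
    have hCzero : C = 0 := by
      have : (Cᵀ)ᴴ * Cᵀ = 0 := by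
        rwa [Matrix.conjTranspose_eq_transpose_of_trivial, Matrix.transpose_transpose]
      have := Matrix.conjTranspose_mul_self_eq_zero.mp this
      have := congrArg Matrix.transpose this
      rwa [Matrix.transpose_transpose, Matrix.transpose_zero] at this
    refine ⟨hCzero, ?_, ?_⟩
    · ext i j
      simpa [hR2] using congrFun (congrFun hR2zero i) (Sum.inl j)
    · ext i j
      simpa [hR2] using congrFun (congrFun hR2zero i) (Sum.inr j)
  · rintro ⟨rfl, rfl, rfl⟩
    have hR2z : R2ᵀ * R2 = 0 := by
      rw [hR2, Matrix.fromCols_zero, Matrix.transpose_zero, Matrix.mul_zero]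
    rw [eM, hR2z, add_zero, eR1, eB]
    rw [Matrix.zero_mul, add_zero]
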